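/- arXiv:2512.22253 — 2 statements merged into one kernel-verified Lean document; each statement's English description precedes it below -/
import Mathlib

section
/- Fuzzy parallelogram inequality: Let X be a complex inner product space, f : X → X → ℂ, and A, B real constants with 0 < A ≤ B such that for all x, y ∈ X: A·|⟨x,y⟩| ≤ |f x y| ≤ B·|⟨x,y⟩|. Then for all x, y ∈ X: (2A/B)·(|f x x| + |f y y|) ≤ |f (x+y) (x+y)| + |f (x−y) (x−y)| ≤ (2B/A)·(|f x x| + |f y y|). -/
open scoped InnerProductSpace

lemma abs_inner_self' {X : Type*} [NormedAddCommGroup X] [InnerProductSpace ℂ X] (x : X) :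
    ‖⟪x, x⟫_ℂ‖ = ‖x‖ * ‖x‖ := by
  have h : (⟪x, x⟫_ℂ : ℂ) = ((‖x‖ ^ 2 : ℝ) : ℂ) := by
    rw [inner_self_eq_norm_sq_to_K]; norm_cast
  rw [h, Complex.norm_real, Real.norm_eq_abs, abs_of_nonneg (by positivity)]
  ring

/-- Fuzzy parallelogram inequality. -/
theorem fuzzy_parallelogram {X : Type*} [NormedAddCommGroup X]
    [InnerProductSpace ℂ X] (f : X → X → ℂ) (A B : ℝ)
    (hA : 0 < A) (hAB : A ≤ B)
    (hf : ∀ x y : X, A * ‖⟪x, y⟫_ℂ‖ ≤ ‖f x y‖ ∧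
      ‖f x y‖ ≤ B * ‖⟪x, y⟫_ℂ‖) :
    ∀ x y : X,
      (2 * A / B) * (‖f x x‖ + ‖f y y‖) ≤
        ‖f (x + y) (x + y)‖ + ‖f (x - y) (x - y)‖ ∧
      ‖f (x + y) (x + y)‖ + ‖f (x - y) (x - y)‖ ≤
        (2 * B / A) * (‖f x x‖ + ‖f y y‖) := by
  intro x y
  have hB : 0 < B := lt_of_lt_of_le hA hAB
  have par := parallelogram_law_with_norm ℂ x y
  have h1 := hf x x
  have h2 := hf y y
  have h3 := hf (x + y) (x + y)
  have h4 := hf (x - y) (x - y)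
  rw [abs_inner_self'] at h1 h2 h3 h4
  have par2 : A * B * (‖x + y‖ * ‖x + y‖) + A * B * (‖x - y‖ * ‖x - y‖) =
      2 * (A * B * (‖x‖ * ‖x‖)) + 2 * (A * B * (‖y‖ * ‖y‖)) := by
    linear_combination (A * B) * par
  have e1 := mul_le_mul_of_nonneg_left h1.2 hA.le
  have e2 := mul_le_mul_of_nonneg_left h2.2 hA.le
  have e3 := mul_le_mul_of_nonneg_left h3.1 hB.le
  have e4 := mul_le_mul_of_nonneg_left h4.1 hB.le
  have g1 := mul_le_mul_of_nonneg_left h1.1 hB.le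
  have g2 := mul_le_mul_of_nonneg_left h2.1 hB.le
  have g3 := mul_le_mul_of_nonneg_left h3.2 hA.le
  have g4 := mul_le_mul_of_nonneg_left h4.2 hA.le
  constructor
  · rw [div_mul_eq_mul_div, div_le_iff₀ hB]
    nlinarith [e1, e2, e3, e4, par2]
  · rw [div_mul_eq_mul_div, le_div_iff₀ hA]
    nlinarith [g1, g2, g3, g4, par2]
end

section
/- Fuzzy Bessel inequality: Let X be a complex inner product space, f : X → X → ℂ, and A, B real constants with 0 < A ≤ B such that for all x, y ∈ X: A·|⟨x,y⟩| ≤ |f x y| ≤ B·|⟨x,y⟩|. If (e_i)_{i∈ℕ} is an orthonormal sequence in X, then for every x ∈ X: ∑_{i=0}^{∞} |f x (e_i)|² ≤ (B²/A)·|f x x| (in particular the series on the left converges). -/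
open scoped InnerProductSpace

/-- Fuzzy Bessel inequality: for an orthonormal sequence `(e i)`,
`∑' i, |f x (e i)|² ≤ (B²/A)·|f x x|`, and the series converges. -/
theorem fuzzy_bessel {X : Type*} [NormedAddCommGroup X]
    [InnerProductSpace ℂ X] (f : X → X → ℂ) (A B : ℝ)
    (hA : 0 < A) (hAB : A ≤ B)
    (hf : ∀ x y : X, A * ‖⟪x, y⟫_ℂ‖ ≤ ‖f x y‖ ∧
      ‖f x y‖ ≤ B * ‖⟪x, y⟫_ℂ‖)
    (e : ℕ → X) (he : ∀ i j : ℕ, ⟪e i, e j⟫_ℂ = if i = j then 1 else 0) :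
    ∀ x : X, Summable (fun i : ℕ => ‖f x (e i)‖ ^ 2) ∧
      ∑' i : ℕ, ‖f x (e i)‖ ^ 2 ≤ (B ^ 2 / A) * ‖f x x‖ := by
  intro x
  have hon : Orthonormal ℂ e := by
    rw [orthonormal_iff_ite]; intro i j; simpa using he i j
  have hB : (0:ℝ) < B := lt_of_lt_of_le hA hAB
  have hsum : Summable fun i : ℕ => ‖⟪e i, x⟫_ℂ‖ ^ 2 := hon.inner_products_summable x
  have key : ∀ i : ℕ, ‖f x (e i)‖ ^ 2 ≤ B ^ 2 * ‖⟪e i, x⟫_ℂ‖ ^ 2 := by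
    intro i
    have h := (hf x (e i)).2
    have h2 : ‖f x (e i)‖ ^ 2 ≤ (B * ‖⟪x, e i⟫_ℂ‖) ^ 2 :=
      pow_le_pow_left₀ (norm_nonneg _) h 2
    calc ‖f x (e i)‖ ^ 2 ≤ (B * ‖⟪x, e i⟫_ℂ‖) ^ 2 := h2
      _ = B ^ 2 * ‖⟪e i, x⟫_ℂ‖ ^ 2 := by
          rw [mul_pow, ← inner_conj_symm x (e i)]
          simp [Complex.norm_conj]
          left
          rw [← inner_conj_symm (e i) x, Complex.norm_conj]
  have hsum2 : Summable (fun i : ℕ => ‖f x (e i)‖ ^ 2) := by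
    refine Summable.of_nonneg_of_le (fun i => by positivity) key ?_
    exact hsum.mul_left _
  refine ⟨hsum2, ?_⟩
  have h1 : ∑' i : ℕ, ‖f x (e i)‖ ^ 2 ≤ B ^ 2 * ‖x‖ ^ 2 := by
    calc ∑' i : ℕ, ‖f x (e i)‖ ^ 2
        ≤ ∑' i : ℕ, B ^ 2 * ‖⟪e i, x⟫_ℂ‖ ^ 2 := Summable.tsum_le_tsum key hsum2 (hsum.mul_left _)
      _ = B ^ 2 * ∑' i : ℕ, ‖⟪e i, x⟫_ℂ‖ ^ 2 := tsum_mul_left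
      _ ≤ B ^ 2 * ‖x‖ ^ 2 := by
          exact mul_le_mul_of_nonneg_left (hon.tsum_inner_products_le x) (by positivity)
  have h2 : ‖x‖ ^ 2 ≤ ‖f x x‖ / A := by
    have := (hf x x).1
    have hxx : ‖⟪x, x⟫_ℂ‖ = ‖x‖ ^ 2 := by
      rw [@inner_self_eq_norm_sq_to_K ℂ]
      simp [norm_pow]
    rw [hxx] at this
    rw [le_div_iff₀ hA]; linarith
  calc ∑' i : ℕ, ‖f x (e i)‖ ^ 2 ≤ B ^ 2 * ‖x‖ ^ 2 := h1
    _ ≤ B ^ 2 * (‖f x x‖ / A) := mul_le_mul_of_nonneg_left h2 (by positivity)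
    _ = (B ^ 2 / A) * ‖f x x‖ := by ring
end
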